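/- The partial sums ∑_{i=1}^{n} μ(i)/i² converge to 6/π² as n → ∞. -/

import Mathlib

open ArithmeticFunction Finset Filter

lemma moebius_L2 : LSeries (fun n => (moebius n : ℂ)) 2 = 6 / (Real.pi : ℂ) ^ 2 := by
  have hs : (1 : ℝ) < (2 : ℂ).re := by norm_num
  have h := LSeries_zeta_mul_Lseries_moebius (s := 2) hs
  rw [LSeries_zeta_eq_riemannZeta hs, riemannZeta_two] at h
  have hpi : ((Real.pi : ℂ)) ^ 2 / 6 ≠ 0 := by
    simp [pow_ne_zero, Complex.ofReal_ne_zero, Real.pi_ne_zero]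
  field_simp at h
  rw [eq_div_iff (pow_ne_zero 2 (Complex.ofReal_ne_zero.mpr Real.pi_ne_zero))]
  linear_combination h

lemma hasSum_moebius : HasSum (fun i : ℕ => (moebius i : ℝ) / (i : ℝ) ^ 2)
    (6 / Real.pi ^ 2) := by
  have hs : (1 : ℝ) < (2 : ℂ).re := by norm_num
  have hsum : LSeriesSummable (fun n => (moebius n : ℂ)) 2 :=
    LSeriesSummable_moebius_iff.mpr hs
  have h : HasSum (LSeries.term (fun n => (moebius n : ℂ)) 2)
      (6 / (Real.pi : ℂ) ^ 2) := moebius_L2 ▸ hsum.hasSum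
  have h2 := (Complex.hasSum_iff _ _).mp h |>.1
  have heq : ∀ n : ℕ, (LSeries.term (fun n => (moebius n : ℂ)) 2 n).re
      = (moebius n : ℝ) / (n : ℝ) ^ 2 := by
    intro n
    rcases eq_or_ne n 0 with rfl | hn
    · simp [LSeries.term]
    · rw [LSeries.term_of_ne_zero hn]
      have : ((n : ℂ) ^ (2 : ℂ)) = ((n : ℝ) ^ 2 : ℝ) := by
        rw [show (2 : ℂ) = ((2 : ℕ) : ℂ) by norm_num, Complex.cpow_natCast]
        push_cast; ring
      rw [this]
      rw [show ((moebius n : ℤ) : ℂ) = ((moebius n : ℝ) : ℂ) by push_cast; ring]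
      rw [← Complex.ofReal_div, Complex.ofReal_re]
  have hre : (6 / (Real.pi : ℂ) ^ 2).re = 6 / Real.pi ^ 2 := by
    rw [show ((Real.pi : ℂ)) ^ 2 = ((Real.pi ^ 2 : ℝ) : ℂ) by push_cast; ring,
      show (6 : ℂ) = ((6 : ℝ) : ℂ) by norm_num, ← Complex.ofReal_div, Complex.ofReal_re]
  rw [hre] at h2
  exact (funext heq) ▸ h2

/-- The partial sums `∑_{i=1}^{n} μ(i)/i²` converge to `6/π²` as `n → ∞`. -/
theorem sum_moebius_div_sq_tendsto :
    Tendsto (fun n : ℕ => ∑ i ∈ Finset.Icc 1 n, (moebius i : ℝ) / (i : ℝ) ^ 2) atTop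
      (nhds (6 / Real.pi ^ 2)) := by
  have h := hasSum_moebius.tendsto_sum_nat
  have heq : ∀ n : ℕ, ∑ i ∈ Finset.Icc 1 n, (moebius i : ℝ) / (i : ℝ) ^ 2
      = ∑ i ∈ Finset.range (n + 1), (moebius i : ℝ) / (i : ℝ) ^ 2 := by
    intro n
    rw [Finset.range_eq_Ico, ← Finset.Ico_add_one_right_eq_Icc]
    apply Finset.sum_subset (Finset.Ico_subset_Ico (Nat.zero_le 1) le_rfl)
    intro x hx hx'
    have : x = 0 := by
      simp only [Finset.mem_Ico] at hx hx'
      omega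
    simp [this]
  simp_rw [heq]
  exact h.comp (tendsto_add_atTop_nat 1)
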